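/- arXiv:2302.02312 — 3 statements merged into one kernel-verified Lean document; each statement's English description precedes it below -/
import Mathlib

section
/- For |q|<1 and complex x, y: (-x;q)_∞ · Σ_{k≥0} q^{k(k-1)} y^k / ((q^2;q^2)_k (-x;q)_k) = (-y;q^2)_∞ · Σ_{k≥0} q^{k(2k-1)} x^{2k} / ((q;q)_{2k} (-y;q^2)_k) + (-qy;q^2)_∞ · Σ_{k≥0} q^{k(2k+1)} x^{2k+1} / ((q;q)_{2k+1} (-qy;q^2)_k). -/
noncomputable def qp (a q : ℂ) (k : ℕ) : ℂ := ∏ j ∈ Finset.range k, (1 - a * q ^ j)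
noncomputable def qpi (a q : ℂ) : ℂ := ∏' j : ℕ, (1 - a * q ^ j)

open Finset Filter Topology

set_option maxHeartbeats 2000000

namespace ThreeTerm

lemma qp_succ (a q : ℂ) (n : ℕ) : qp a q (n + 1) = qp a q n * (1 - a * q ^ n) :=
  Finset.prod_range_succ _ _

lemma qp_zero (a q : ℂ) : qp a q 0 = 1 := Finset.prod_range_zero _

lemma factor_ne {a q : ℂ} (h : ∀ k, qp a q k ≠ 0) (j : ℕ) : 1 - a * q ^ j ≠ 0 := by
  have h' := h (j + 1)
  rw [qp] at h'
  exact Finset.prod_ne_zero_iff.mp h' j (Finset.mem_range.mpr (Nat.lt_succ_self j))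

lemma qp_q_ne {q : ℂ} (hq : ‖q‖ < 1) (n : ℕ) : qp q q n ≠ 0 := by
  rw [qp]
  refine Finset.prod_ne_zero_iff.mpr fun j _ hcon => ?_
  have h1 : (1 : ℂ) = q * q ^ j := by linear_combination hcon
  have h2 : ‖q * q ^ j‖ < 1 := by
    rw [norm_mul, norm_pow]
    calc ‖q‖ * ‖q‖ ^ j ≤ ‖q‖ * 1 := by
          exact mul_le_mul_of_nonneg_left (pow_le_one₀ (norm_nonneg q) hq.le) (norm_nonneg q)
      _ < 1 := by simpa using hq
  rw [← h1] at h2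
  simp at h2

lemma norm_qp_q_ge {q : ℂ} (hq : ‖q‖ < 1) (n : ℕ) :
    (1 - ‖q‖) ^ n ≤ ‖qp q q n‖ := by
  rw [qp, norm_prod]
  have hc : (1 - ‖q‖) ^ n = ∏ _j ∈ Finset.range n, (1 - ‖q‖) := by
    rw [Finset.prod_const, Finset.card_range]
  rw [hc]
  refine Finset.prod_le_prod (fun j _ => by linarith) (fun j _ => ?_)
  have h1 : ‖q * q ^ j‖ ≤ ‖q‖ := by
    rw [norm_mul, norm_pow]
    calc ‖q‖ * ‖q‖ ^ j ≤ ‖q‖ * 1 :=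
          mul_le_mul_of_nonneg_left (pow_le_one₀ (norm_nonneg q) hq.le) (norm_nonneg q)
      _ = ‖q‖ := mul_one _
  calc 1 - ‖q‖ ≤ 1 - ‖q * q ^ j‖ := by linarith
    _ = ‖(1 : ℂ)‖ - ‖q * q ^ j‖ := by simp
    _ ≤ ‖1 - q * q ^ j‖ := norm_sub_norm_le _ _

noncomputable def c (q : ℂ) (n : ℕ) : ℂ := q ^ n.choose 2 / qp q q n

lemma two_mul_choose_two (n : ℕ) : 2 * n.choose 2 = n * (n - 1) := by
  induction n with
  | zero => rfl
  | succ k ih =>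
    rw [Nat.choose_succ_succ, Nat.choose_one_right, Nat.succ_sub_one, Nat.mul_add, ih]
    rcases k with _ | j
    · rfl
    · simp only [Nat.succ_sub_one]
      ring

lemma choose_two_even (m : ℕ) : (2 * m).choose 2 = m * (2 * m - 1) := by
  have h := two_mul_choose_two (2 * m)
  rw [mul_assoc] at h
  omega

lemma choose_two_odd (m : ℕ) : (2 * m + 1).choose 2 = m * (2 * m + 1) := by
  have h := two_mul_choose_two (2 * m + 1)
  simp only [Nat.add_sub_cancel] at h
  have h2 : (2 * m + 1) * (2 * m) = 2 * (m * (2 * m + 1)) := by ring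
  omega

lemma summable_bound {t R : ℝ} (h0 : 0 < t) (h1 : t < 1) (hR : 0 < R) :
    Summable (fun n => t ^ n.choose 2 * R ^ n) := by
  have hpos : ∀ n : ℕ, 0 < t ^ n.choose 2 * R ^ n := fun n => by positivity
  refine summable_of_ratio_test_tendsto_lt_one zero_lt_one
    (Filter.Eventually.of_forall fun n => (hpos n).ne') ?_
  have hrat : ∀ n : ℕ,
      ‖t ^ (n + 1).choose 2 * R ^ (n + 1)‖ / ‖t ^ n.choose 2 * R ^ n‖ = t ^ n * R := by
    intro n
    have hch : (n + 1).choose 2 = n.choose 2 + n := by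
      rw [Nat.choose_succ_succ, Nat.choose_one_right]; ring
    rw [hch, Real.norm_of_nonneg (by positivity), Real.norm_of_nonneg (hpos n).le,
      pow_add, pow_succ]
    field_simp
  have : Filter.Tendsto (fun n : ℕ => t ^ n * R) Filter.atTop (nhds 0) := by
    have := (tendsto_pow_atTop_nhds_zero_of_lt_one h0.le h1).mul_const R
    simpa using this
  exact (Filter.Tendsto.congr (fun n => (hrat n).symm) this)

lemma norm_c_pow_le {q : ℂ} (hq : ‖q‖ < 1) {z : ℂ} {w : ℝ} (hz : ‖z‖ ≤ w) (n : ℕ) :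
    ‖c q n * z ^ n‖ ≤ (max ‖q‖ (1/2)) ^ n.choose 2 * ((w + 1) / (1 - ‖q‖)) ^ n := by
  have h1q : (0:ℝ) < 1 - ‖q‖ := by linarith
  have hw : (0:ℝ) ≤ w := le_trans (norm_nonneg z) hz
  have hkey : ‖c q n * z ^ n‖
      = ‖q‖ ^ n.choose 2 * ‖z‖ ^ n / ‖qp q q n‖ := by
    rw [c, norm_mul, norm_div, norm_pow, norm_pow]
    ring
  rw [hkey, div_pow, ← mul_div_assoc]
  refine div_le_div₀ (by positivity) ?_ (by positivity) (norm_qp_q_ge hq n)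
  have e1 : ‖q‖ ^ n.choose 2 ≤ (max ‖q‖ (1/2)) ^ n.choose 2 :=
    pow_le_pow_left₀ (norm_nonneg q) (le_max_left _ _) _
  have e2 : ‖z‖ ^ n ≤ (w + 1) ^ n :=
    pow_le_pow_left₀ (norm_nonneg z) (by linarith) _
  exact mul_le_mul e1 e2 (by positivity) (by positivity)

lemma summable_norm_c {q : ℂ} (hq : ‖q‖ < 1) (z : ℂ) :
    Summable (fun n => ‖c q n * z ^ n‖) := by
  have h1q : (0:ℝ) < 1 - ‖q‖ := by linarith
  refine Summable.of_nonneg_of_le (fun n => norm_nonneg _)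
    (fun n => norm_c_pow_le hq le_rfl n) (summable_bound ?_ ?_ ?_)
  · exact lt_of_lt_of_le (by norm_num) (le_max_right _ _)
  · exact max_lt hq (by norm_num)
  · positivity

lemma summable_c {q : ℂ} (hq : ‖q‖ < 1) (z : ℂ) :
    Summable (fun n => c q n * z ^ n) :=
  (summable_norm_c hq z).of_norm

lemma multipliable_qp {q : ℂ} (hq : ‖q‖ < 1) (a : ℂ) (h : ∀ j, 1 - a * q ^ j ≠ 0) :
    Multipliable (fun j : ℕ => 1 - a * q ^ j) := by
  refine Complex.multipliable_of_summable_log ?_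
  have htend : Filter.Tendsto (fun j : ℕ => ‖a‖ * ‖q‖ ^ j) Filter.atTop (nhds 0) := by
    simpa using (tendsto_pow_atTop_nhds_zero_of_lt_one (norm_nonneg q) hq).const_mul ‖a‖
  have hev : ∀ᶠ j in Filter.atTop, ‖Complex.log (1 - a * q ^ j)‖ ≤ 3/2 * (‖a‖ * ‖q‖ ^ j) := by
    filter_upwards [htend.eventually_le_const (by norm_num : (0:ℝ) < 1/2)] with j hj
    have h2 : ‖-(a * q ^ j)‖ ≤ 1/2 := by
      rw [norm_neg, norm_mul, norm_pow]; exact hj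
    have := Complex.norm_log_one_add_half_le_self h2
    rw [show (1 : ℂ) + -(a * q ^ j) = 1 - a * q ^ j by ring] at this
    rw [norm_neg, norm_mul, norm_pow] at this
    exact this
  exact Summable.of_norm_bounded_eventually_nat
    (((summable_geometric_of_lt_one (norm_nonneg q) hq).mul_left ‖a‖).mul_left (3/2)) hev

lemma c_zero (q : ℂ) : c q 0 = 1 := by simp [c, qp_zero]

lemma funeq {q : ℂ} (hq : ‖q‖ < 1) (z : ℂ) :
    ∑' n, c q n * z ^ n = (1 + z) * ∑' n, c q n * (q * z) ^ n := by
  have hs := summable_c hq (q * z)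
  have hs1 : Summable (fun n => c q (n + 1) * (q * z) ^ (n + 1)) :=
    (summable_nat_add_iff 1).mpr hs
  have hs2 : Summable (fun n => c q n * q ^ n * z ^ (n + 1)) := by
    refine (hs.mul_left z).congr fun n => ?_
    rw [mul_pow]; ring
  have key : ∀ n : ℕ, c q n * q ^ n = c q (n + 1) * (1 - q * q ^ n) := by
    intro n
    have hch : (n + 1).choose 2 = n.choose 2 + n := by
      rw [Nat.choose_succ_succ, Nat.choose_one_right]; ring
    rw [c, c, hch, qp_succ]
    have hn := qp_q_ne hq n
    have hn1 := factor_ne (qp_q_ne hq) n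
    field_simp
    linear_combination (-(q ^ n.choose 2 * q ^ n)) * mul_inv_cancel₀ hn1
  calc ∑' n, c q n * z ^ n
      = c q 0 * z ^ 0 + ∑' n, c q (n + 1) * z ^ (n + 1) :=
        Summable.tsum_eq_zero_add (summable_c hq z)
    _ = c q 0 * (q * z) ^ 0 + ∑' n, (c q (n + 1) * (q * z) ^ (n + 1)
          + c q n * q ^ n * z ^ (n + 1)) := by
        rw [pow_zero, pow_zero]
        congr 1
        refine tsum_congr fun n => ?_
        rw [key n, mul_pow]
        ring
    _ = (c q 0 * (q * z) ^ 0 + ∑' n, c q (n + 1) * (q * z) ^ (n + 1))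
          + ∑' n, c q n * q ^ n * z ^ (n + 1) := by
        rw [Summable.tsum_add hs1 hs2]; ring
    _ = ∑' n, c q n * (q * z) ^ n + z * ∑' n, c q n * (q * z) ^ n := by
        rw [← Summable.tsum_eq_zero_add hs, ← tsum_mul_left]
        congr 1
        refine tsum_congr fun n => ?_
        rw [mul_pow]; ring
    _ = (1 + z) * ∑' n, c q n * (q * z) ^ n := by ring

lemma iterate_funeq {q : ℂ} (hq : ‖q‖ < 1) (z : ℂ) (N : ℕ) :
    ∑' n, c q n * z ^ n
      = (∏ j ∈ Finset.range N, (1 + z * q ^ j)) * ∑' n, c q n * (q ^ N * z) ^ n := by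
  induction N with
  | zero => simp
  | succ N ih =>
    rw [ih, funeq hq (q ^ N * z), Finset.prod_range_succ]
    have : q * (q ^ N * z) = q ^ (N + 1) * z := by rw [pow_succ]; ring
    rw [this]
    ring

lemma tendsto_S_one {q : ℂ} (hq : ‖q‖ < 1) (z : ℂ) :
    Filter.Tendsto (fun N : ℕ => ∑' n, c q n * (q ^ N * z) ^ n) Filter.atTop (nhds 1) := by
  set M : ℝ := ∑' n, ‖c q (n + 1) * z ^ (n + 1)‖ with hM
  have hMnn : 0 ≤ M := tsum_nonneg fun n => norm_nonneg _
  have hsz : Summable (fun n => ‖c q (n + 1) * z ^ (n + 1)‖) :=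
    (summable_nat_add_iff 1).mpr (summable_norm_c hq z)
  have hbound : ∀ N : ℕ, ‖(∑' n, c q n * (q ^ N * z) ^ n) - 1‖ ≤ ‖q‖ ^ N * M := by
    intro N
    have hsN := summable_c hq (q ^ N * z)
    have hsN1 : Summable (fun n => c q (n + 1) * (q ^ N * z) ^ (n + 1)) :=
      (summable_nat_add_iff 1).mpr hsN
    have e1 : (∑' n, c q n * (q ^ N * z) ^ n) - 1
        = ∑' n, c q (n + 1) * (q ^ N * z) ^ (n + 1) := by
      rw [Summable.tsum_eq_zero_add hsN, c_zero]
      ring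
    rw [e1]
    calc ‖∑' n, c q (n + 1) * (q ^ N * z) ^ (n + 1)‖
        ≤ ∑' n, ‖c q (n + 1) * (q ^ N * z) ^ (n + 1)‖ :=
          norm_tsum_le_tsum_norm ((summable_nat_add_iff 1).mpr (summable_norm_c hq (q ^ N * z)))
      _ ≤ ∑' n, ‖q‖ ^ N * ‖c q (n + 1) * z ^ (n + 1)‖ := by
          refine Summable.tsum_le_tsum (fun n => ?_)
            ((summable_nat_add_iff 1).mpr (summable_norm_c hq (q ^ N * z)))
            (hsz.mul_left _)
          have hle : ‖q‖ ^ (N * (n + 1)) ≤ ‖q‖ ^ N :=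
            pow_le_pow_of_le_one (norm_nonneg q) hq.le
              (Nat.le_mul_of_pos_right N (Nat.succ_pos n))
          have heq : ‖c q (n + 1) * (q ^ N * z) ^ (n + 1)‖
              = ‖q‖ ^ (N * (n + 1)) * ‖c q (n + 1) * z ^ (n + 1)‖ := by
            simp only [norm_mul, norm_pow, mul_pow, ← pow_mul]
            ring
          rw [heq]
          exact mul_le_mul_of_nonneg_right hle (norm_nonneg _)
      _ = ‖q‖ ^ N * M := tsum_mul_left
  rw [tendsto_iff_norm_sub_tendsto_zero]
  refine squeeze_zero (fun N => norm_nonneg _) hbound ?_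
  simpa using (tendsto_pow_atTop_nhds_zero_of_lt_one (norm_nonneg q) hq).mul_const M

lemma euler {q : ℂ} (hq : ‖q‖ < 1) (b : ℂ) (h : ∀ j : ℕ, 1 + b * q ^ j ≠ 0) :
    qpi (-b) q = ∑' n, c q n * b ^ n := by
  have h' : ∀ j : ℕ, 1 - (-b) * q ^ j ≠ 0 := fun j => by
    have := h j; intro hcon; apply this; linear_combination hcon
  have hm := multipliable_qp hq (-b) h'
  have hp : Filter.Tendsto (fun N : ℕ => ∏ j ∈ Finset.range N, (1 + b * q ^ j))
      Filter.atTop (nhds (qpi (-b) q)) := by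
    have := hm.hasProd.tendsto_prod_nat
    refine this.congr fun N => Finset.prod_congr rfl fun j _ => by ring
  have hmul : Filter.Tendsto
      (fun N : ℕ => (∏ j ∈ Finset.range N, (1 + b * q ^ j)) * ∑' n, c q n * (q ^ N * b) ^ n)
      Filter.atTop (nhds (qpi (-b) q * 1)) := hp.mul (tendsto_S_one hq b)
  have hconst : (fun N : ℕ =>
      (∏ j ∈ Finset.range N, (1 + b * q ^ j)) * ∑' n, c q n * (q ^ N * b) ^ n)
      = fun _ => ∑' n, c q n * b ^ n := funext fun N => (iterate_funeq hq b N).symm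
  rw [hconst] at hmul
  have := tendsto_nhds_unique hmul tendsto_const_nhds
  rw [mul_one] at this
  exact this

lemma qpi_shift {q : ℂ} (hq : ‖q‖ < 1) (a : ℂ) (h : ∀ j : ℕ, 1 - a * q ^ j ≠ 0) (k : ℕ) :
    qpi a q = qp a q k * qpi (a * q ^ k) q := by
  have hne : ∀ j : ℕ, 1 - a * q ^ k * q ^ j ≠ 0 := fun j => by
    have h' := h (j + k)
    intro hcon
    apply h'
    rw [pow_add]
    linear_combination hcon
  have hm2 : Multipliable (fun n : ℕ => 1 - a * q ^ (n + k)) :=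
    (multipliable_qp hq (a * q ^ k) hne).congr fun n => by rw [pow_add]; ring
  have hsplit := Multipliable.prod_mul_tprod_nat_mul' (f := fun j : ℕ => 1 - a * q ^ j) (k := k) hm2
  rw [qpi, ← hsplit]
  congr 1
  rw [qpi]
  refine tprod_congr fun j => ?_
  show (1 : ℂ) - a * q ^ (j + k) = 1 - a * q ^ k * q ^ j
  rw [pow_add]
  ring

noncomputable def FF (q x y : ℂ) (k n : ℕ) : ℂ :=
  c (q ^ 2) k * y ^ k * (c q n * x ^ n) * q ^ (k * n)

noncomputable def GG (q x y : ℂ) (n : ℕ) : ℂ :=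
  c q n * x ^ n * qpi (-(y * q ^ n)) (q ^ 2)

section Main

variable {q x y : ℂ} (hq : ‖q‖ < 1)
variable (h1 : ∀ k, qp (-x) q k ≠ 0) (h2 : ∀ k, qp (-y) (q ^ 2) k ≠ 0)
    (h3 : ∀ k, qp (-(q * y)) (q ^ 2) k ≠ 0)

lemma hq2' (hq : ‖q‖ < 1) : ‖q ^ 2‖ < 1 := by
  rw [norm_pow]
  exact pow_lt_one₀ (norm_nonneg q) hq two_ne_zero

lemma hx_ne (h1 : ∀ k, qp (-x) q k ≠ 0) (j : ℕ) : (1 : ℂ) + x * q ^ j ≠ 0 := by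
  have := factor_ne h1 j
  intro hcon; apply this; linear_combination hcon

lemma hA_ne (h1 : ∀ k, qp (-x) q k ≠ 0) (k j : ℕ) : (1 : ℂ) + x * q ^ k * q ^ j ≠ 0 := by
  have h := hx_ne h1 (k + j)
  rw [pow_add] at h
  intro hcon; apply h; linear_combination hcon

lemma hyq_ne (h2 : ∀ k, qp (-y) (q ^ 2) k ≠ 0) (i : ℕ) : (1 : ℂ) + y * (q ^ 2) ^ i ≠ 0 := by
  have := factor_ne h2 i
  intro hcon; apply this; linear_combination hcon

lemma hqy_ne (h3 : ∀ k, qp (-(q * y)) (q ^ 2) k ≠ 0) (i : ℕ) :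
    (1 : ℂ) + q * y * (q ^ 2) ^ i ≠ 0 := by
  have := factor_ne h3 i
  intro hcon; apply this; linear_combination hcon

lemma hyqn_ne (h2 : ∀ k, qp (-y) (q ^ 2) k ≠ 0) (h3 : ∀ k, qp (-(q * y)) (q ^ 2) k ≠ 0)
    (n j : ℕ) : (1 : ℂ) + y * q ^ n * (q ^ 2) ^ j ≠ 0 := by
  rcases Nat.even_or_odd n with ⟨m, hm⟩ | ⟨m, hm⟩
  · have hpow : q ^ n * (q ^ 2) ^ j = (q ^ 2) ^ (m + j) := by
      subst hm
      rw [← pow_mul, ← pow_mul, ← pow_add]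
      congr 1
      omega
    have h := hyq_ne h2 (m + j)
    intro hcon; apply h; linear_combination hcon - y * hpow
  · have hpow : q ^ n * (q ^ 2) ^ j = q * (q ^ 2) ^ (m + j) := by
      subst hm
      rw [← pow_mul, ← pow_mul, ← pow_succ', ← pow_add]
      congr 1
      omega
    have h := hqy_ne h3 (m + j)
    intro hcon; apply h; linear_combination hcon - y * hpow

lemma hL_eq (hq : ‖q‖ < 1) (h1 : ∀ k, qp (-x) q k ≠ 0) :
    qpi (-x) q * ∑' k : ℕ, q ^ (k * (k - 1)) * y ^ k / (qp (q ^ 2) (q ^ 2) k * qp (-x) q k)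
      = ∑' k : ℕ, ∑' n : ℕ, FF q x y k n := by
  rw [← tsum_mul_left]
  refine tsum_congr fun k => ?_
  have hcy : (q ^ 2) ^ k.choose 2 = q ^ (k * (k - 1)) := by
    rw [← pow_mul, two_mul_choose_two]
  have e2 : qpi (-x) q * (q ^ (k * (k - 1)) * y ^ k / (qp (q ^ 2) (q ^ 2) k * qp (-x) q k))
      = c (q ^ 2) k * y ^ k * qpi (-(x * q ^ k)) q := by
    rw [qpi_shift hq (-x) (factor_ne h1) k,
      show -x * q ^ k = -(x * q ^ k) by ring, c, hcy]
    have hb := qp_q_ne (hq2' hq) k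
    have hb2 := h1 k
    field_simp
  rw [e2, euler hq (x * q ^ k) (hA_ne h1 k), ← tsum_mul_left]
  refine tsum_congr fun n => ?_
  rw [FF, mul_pow, ← pow_mul]
  ring

lemma hB1_summable (hq : ‖q‖ < 1) (w : ℝ) (hw : 0 ≤ w) :
    Summable (fun n : ℕ => (max ‖q‖ (1/2)) ^ n.choose 2 * ((w + 1) / (1 - ‖q‖)) ^ n) := by
  have h1q : (0:ℝ) < 1 - ‖q‖ := by linarith
  refine summable_bound ?_ ?_ ?_
  · exact lt_of_lt_of_le (by norm_num) (le_max_right _ _)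
  · exact max_lt hq (by norm_num)
  · positivity

lemma FF_norm_le (hq : ‖q‖ < 1) (k n : ℕ) :
    ‖FF q x y k n‖ ≤ ((max ‖q ^ 2‖ (1/2)) ^ k.choose 2 * ((‖y‖ + 1) / (1 - ‖q ^ 2‖)) ^ k)
      * ((max ‖q‖ (1/2)) ^ n.choose 2 * ((‖x‖ + 1) / (1 - ‖q‖)) ^ n) := by
  have e : ‖FF q x y k n‖ = ‖c (q ^ 2) k * y ^ k‖ * ‖c q n * x ^ n‖ * ‖q‖ ^ (k * n) := by
    rw [FF]
    simp only [norm_mul, norm_pow]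
  rw [e]
  have h1q : (0:ℝ) < 1 - ‖q‖ := by linarith
  have h1q2 : (0:ℝ) < 1 - ‖q ^ 2‖ := by have := hq2' (q := q) hq; linarith
  have hm1 : (0:ℝ) < max ‖q‖ (1/2) := lt_of_lt_of_le (by norm_num) (le_max_right _ _)
  have hm2 : (0:ℝ) < max ‖q ^ 2‖ (1/2) := lt_of_lt_of_le (by norm_num) (le_max_right _ _)
  have b1 := norm_c_pow_le (hq2' hq) (le_refl ‖y‖) k
  have b2 := norm_c_pow_le hq (le_refl ‖x‖) n
  have b3 : ‖q‖ ^ (k * n) ≤ 1 := pow_le_one₀ (norm_nonneg q) hq.le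
  calc ‖c (q ^ 2) k * y ^ k‖ * ‖c q n * x ^ n‖ * ‖q‖ ^ (k * n)
      ≤ ‖c (q ^ 2) k * y ^ k‖ * ‖c q n * x ^ n‖ * 1 := by
        exact mul_le_mul_of_nonneg_left b3 (mul_nonneg (norm_nonneg _) (norm_nonneg _))
    _ = ‖c (q ^ 2) k * y ^ k‖ * ‖c q n * x ^ n‖ := mul_one _
    _ ≤ _ := mul_le_mul b1 b2 (norm_nonneg _) (by positivity)

lemma FF_summable_norm (hq : ‖q‖ < 1) :
    Summable (fun p : ℕ × ℕ => ‖FF q x y p.1 p.2‖) := by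
  refine Summable.of_nonneg_of_le (fun p => norm_nonneg _) (fun p => FF_norm_le hq p.1 p.2) ?_
  refine Summable.mul_of_nonneg (hB1_summable (hq2' hq) ‖y‖ (norm_nonneg y))
    (hB1_summable hq ‖x‖ (norm_nonneg x)) (fun k => ?_) (fun n => ?_)
  · have h1q : (0:ℝ) < 1 - ‖q ^ 2‖ := by have := hq2' (q := q) hq; linarith
    have : (0:ℝ) < max ‖q ^ 2‖ (1/2) := lt_of_lt_of_le (by norm_num) (le_max_right _ _)
    positivity
  · have h1q : (0:ℝ) < 1 - ‖q‖ := by linarith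
    have : (0:ℝ) < max ‖q‖ (1/2) := lt_of_lt_of_le (by norm_num) (le_max_right _ _)
    positivity

lemma FF_swap (hq : ‖q‖ < 1) :
    ∑' k : ℕ, ∑' n : ℕ, FF q x y k n = ∑' n : ℕ, ∑' k : ℕ, FF q x y k n := by
  refine (Summable.tsum_comm' ?_ ?_ ?_).symm
  · exact (FF_summable_norm hq).of_norm
  · intro k
    refine ((summable_c hq (x * q ^ k)).mul_left (c (q ^ 2) k * y ^ k)).congr fun n => ?_
    rw [FF, mul_pow, ← pow_mul]
    ring
  · intro n
    refine ((summable_c (hq2' hq) (y * q ^ n)).mul_left (c q n * x ^ n)).congr fun k => ?_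
    rw [FF, mul_pow, ← pow_mul, mul_comm n k]
    ring

lemma FF_inner (hq : ‖q‖ < 1) (h2 : ∀ k, qp (-y) (q ^ 2) k ≠ 0)
    (h3 : ∀ k, qp (-(q * y)) (q ^ 2) k ≠ 0) (n : ℕ) :
    ∑' k : ℕ, FF q x y k n = GG q x y n := by
  calc ∑' k : ℕ, FF q x y k n
      = ∑' k : ℕ, (c q n * x ^ n) * (c (q ^ 2) k * (y * q ^ n) ^ k) := by
        refine tsum_congr fun k => ?_
        rw [FF, mul_pow, ← pow_mul, mul_comm n k]
        ring
    _ = (c q n * x ^ n) * ∑' k : ℕ, c (q ^ 2) k * (y * q ^ n) ^ k := tsum_mul_left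
    _ = GG q x y n := by
        rw [← euler (hq2' hq) (y * q ^ n) (hyqn_ne h2 h3 n), GG]

lemma GG_summable (hq : ‖q‖ < 1) (h2 : ∀ k, qp (-y) (q ^ 2) k ≠ 0)
    (h3 : ∀ k, qp (-(q * y)) (q ^ 2) k ≠ 0) : Summable (GG q x y) := by
  set M : ℝ := ∑' k : ℕ, (max ‖q ^ 2‖ (1/2)) ^ k.choose 2 * ((‖y‖ + 1) / (1 - ‖q ^ 2‖)) ^ k
    with hM
  have hB2 := hB1_summable (hq2' hq) ‖y‖ (norm_nonneg y)
  refine Summable.of_norm_bounded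
    ((hB1_summable hq ‖x‖ (norm_nonneg x)).mul_right M) (fun n => ?_)
  have hyn : ‖y * q ^ n‖ ≤ ‖y‖ := by
    rw [norm_mul, norm_pow]
    calc ‖y‖ * ‖q‖ ^ n ≤ ‖y‖ * 1 :=
          mul_le_mul_of_nonneg_left (pow_le_one₀ (norm_nonneg q) hq.le) (norm_nonneg y)
      _ = ‖y‖ := mul_one _
  have hqpi : ‖qpi (-(y * q ^ n)) (q ^ 2)‖ ≤ M := by
    rw [euler (hq2' hq) (y * q ^ n) (hyqn_ne h2 h3 n), hM]
    refine le_trans (norm_tsum_le_tsum_norm (summable_norm_c (hq2' hq) (y * q ^ n))) ?_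
    exact Summable.tsum_le_tsum (fun k => norm_c_pow_le (hq2' hq) hyn k)
      (summable_norm_c (hq2' hq) (y * q ^ n)) hB2
  have hMnn : 0 ≤ M := tsum_nonneg fun k => by
    have h1q : (0:ℝ) < 1 - ‖q ^ 2‖ := by have := hq2' (q := q) hq; linarith
    have : (0:ℝ) < max ‖q ^ 2‖ (1/2) := lt_of_lt_of_le (by norm_num) (le_max_right _ _)
    positivity
  have h1q : (0:ℝ) < 1 - ‖q‖ := by linarith
  have hm1 : (0:ℝ) < max ‖q‖ (1/2) := lt_of_lt_of_le (by norm_num) (le_max_right _ _)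
  rw [GG, norm_mul]
  exact mul_le_mul (norm_c_pow_le hq le_rfl n) hqpi (norm_nonneg _) (by positivity)

lemma GG_even (hq : ‖q‖ < 1) (h2 : ∀ k, qp (-y) (q ^ 2) k ≠ 0) (m : ℕ) :
    GG q x y (2 * m) = qpi (-y) (q ^ 2) *
      (q ^ (m * (2 * m - 1)) * x ^ (2 * m) / (qp q q (2 * m) * qp (-y) (q ^ 2) m)) := by
  rw [GG, c, choose_two_even, qpi_shift (hq2' hq) (-y) (factor_ne h2) m,
    show -y * (q ^ 2) ^ m = -(y * q ^ (2 * m)) by rw [← pow_mul]; ring]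
  have hb1 := qp_q_ne hq (2 * m)
  have hb2 := h2 m
  field_simp

lemma GG_odd (hq : ‖q‖ < 1) (h3 : ∀ k, qp (-(q * y)) (q ^ 2) k ≠ 0) (m : ℕ) :
    GG q x y (2 * m + 1) = qpi (-(q * y)) (q ^ 2) *
      (q ^ (m * (2 * m + 1)) * x ^ (2 * m + 1) /
        (qp q q (2 * m + 1) * qp (-(q * y)) (q ^ 2) m)) := by
  rw [GG, c, choose_two_odd, qpi_shift (hq2' hq) (-(q * y)) (factor_ne h3) m,
    show -(q * y) * (q ^ 2) ^ m = -(y * q ^ (2 * m + 1)) by rw [← pow_mul]; ring]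
  have hb1 := qp_q_ne hq (2 * m + 1)
  have hb2 := h3 m
  field_simp
  rw [mul_comm y q, mul_div_cancel_right₀ _ hb2]

end Main

end ThreeTerm

open ThreeTerm in
theorem three_term_quadratic (q x y : ℂ) (hq : ‖q‖ < 1)
    (h1 : ∀ k, qp (-x) q k ≠ 0) (h2 : ∀ k, qp (-y) (q ^ 2) k ≠ 0)
    (h3 : ∀ k, qp (-(q * y)) (q ^ 2) k ≠ 0) :
    qpi (-x) q * ∑' k : ℕ, q ^ (k * (k - 1)) * y ^ k / (qp (q ^ 2) (q ^ 2) k * qp (-x) q k) =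
      qpi (-y) (q ^ 2) *
          ∑' k : ℕ, q ^ (k * (2 * k - 1)) * x ^ (2 * k) /
            (qp q q (2 * k) * qp (-y) (q ^ 2) k) +
        qpi (-(q * y)) (q ^ 2) *
          ∑' k : ℕ, q ^ (k * (2 * k + 1)) * x ^ (2 * k + 1) /
            (qp q q (2 * k + 1) * qp (-(q * y)) (q ^ 2) k) := by
  have hGs := GG_summable (x := x) hq h2 h3
  calc qpi (-x) q * ∑' k : ℕ, q ^ (k * (k - 1)) * y ^ k /
        (qp (q ^ 2) (q ^ 2) k * qp (-x) q k)
      = ∑' k : ℕ, ∑' n : ℕ, FF q x y k n := hL_eq hq h1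
    _ = ∑' n : ℕ, ∑' k : ℕ, FF q x y k n := FF_swap hq
    _ = ∑' n : ℕ, GG q x y n := tsum_congr (FF_inner hq h2 h3)
    _ = (∑' m : ℕ, GG q x y (2 * m)) + ∑' m : ℕ, GG q x y (2 * m + 1) := by
        refine (tsum_even_add_odd ?_ ?_).symm
        · exact hGs.comp_injective fun a b hab => by omega
        · exact hGs.comp_injective fun a b hab => by omega
    _ = _ := by
        rw [← tsum_mul_left, ← tsum_mul_left]
        congr 1
        · exact tsum_congr fun m => GG_even hq h2 m
        · exact tsum_congr fun m => GG_odd hq h3 m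
end

section
/- For |q|<1, |p|<1 and complex x, y, r with |r|≤1: Σ_{k≥0} p^{k(k-1)/2} y^k (-r^k x;q)_∞ / (p;p)_k = Σ_{k≥0} q^{k(k-1)/2} x^k (-r^k y;p)_∞ / (q;q)_k. -/
open Finset Filter Topology

namespace DoubleEuler

lemma exp_succ (k : ℕ) : (k + 1) * ((k + 1) - 1) / 2 = k * (k - 1) / 2 + k := by
  rw [← Nat.choose_two_right, ← Nat.choose_two_right, Nat.choose_succ_succ',
    Nat.choose_one_right, add_comm]

lemma summable_KE {t u : ℝ} (ht0 : 0 ≤ t) (ht : t < 1) (hu : 0 ≤ u) :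
    Summable (fun k : ℕ => t ^ (k * (k - 1) / 2) * u ^ k) := by
  apply summable_of_ratio_norm_eventually_le (r := 1 / 2) (by norm_num)
  have h : Tendsto (fun n : ℕ => t ^ n * u) atTop (𝓝 0) := by
    simpa using (tendsto_pow_atTop_nhds_zero_of_lt_one ht0 ht).mul_const u
  have h2 : ∀ᶠ n : ℕ in atTop, t ^ n * u ≤ 1 / 2 :=
    h.eventually (eventually_le_nhds (by norm_num))
  filter_upwards [h2] with n hn
  have hpos : (0 : ℝ) ≤ t ^ (n * (n - 1) / 2) * u ^ n := by positivity
  rw [Real.norm_of_nonneg (by positivity), Real.norm_of_nonneg hpos]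
  rw [exp_succ, pow_add, pow_succ]
  calc t ^ (n * (n - 1) / 2) * t ^ n * (u ^ n * u)
      = (t ^ n * u) * (t ^ (n * (n - 1) / 2) * u ^ n) := by ring
    _ ≤ (1 / 2) * (t ^ (n * (n - 1) / 2) * u ^ n) :=
        mul_le_mul_of_nonneg_right hn hpos

lemma weier (s : Finset ℕ) (a : ℕ → ℝ) (h0 : ∀ j, 0 ≤ a j) (h1 : ∀ j, a j ≤ 1) :
    1 - ∑ j ∈ s, a j ≤ ∏ j ∈ s, (1 - a j) := by
  induction s using Finset.cons_induction with
  | empty => simp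
  | cons i s hi ih =>
    rw [Finset.prod_cons, Finset.sum_cons]
    have hprod : 1 - ∑ j ∈ s, a j ≤ ∏ j ∈ s, (1 - a j) := ih
    have hnn : 0 ≤ 1 - a i := by linarith [h1 i]
    have hsum : 0 ≤ ∑ j ∈ s, a j := Finset.sum_nonneg fun j _ => h0 j
    calc 1 - (a i + ∑ j ∈ s, a j) ≤ (1 - a i) * (1 - ∑ j ∈ s, a j) := by nlinarith [h0 i]
      _ ≤ (1 - a i) * ∏ j ∈ s, (1 - a j) := mul_le_mul_of_nonneg_left hprod hnn

lemma qp_norm_lower {q : ℂ} (hq : ‖q‖ < 1) (k : ℕ) :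
    ∏ j ∈ Finset.range k, (1 - ‖q‖ ^ (j + 1)) ≤ ‖qp q q k‖ := by
  rw [qp, norm_prod]
  apply Finset.prod_le_prod
  · intro j _
    have : ‖q‖ ^ (j + 1) < 1 := pow_lt_one₀ (norm_nonneg q) hq (Nat.succ_ne_zero j)
    linarith
  · intro j _
    have h1 : ‖(1 : ℂ)‖ - ‖q * q ^ j‖ ≤ ‖1 - q * q ^ j‖ := norm_sub_norm_le _ _
    have h2 : ‖q * q ^ j‖ = ‖q‖ ^ (j + 1) := by
      rw [norm_mul, norm_pow, pow_succ]; ring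
    rw [h2, norm_one] at h1
    linarith

lemma qp_lower {q : ℂ} (hq : ‖q‖ < 1) : ∃ c > 0, ∀ k, c ≤ ‖qp q q k‖ := by
  set t := ‖q‖ with ht
  have ht0 : 0 ≤ t := norm_nonneg q
  have htlt : ∀ j : ℕ, t ^ (j + 1) < 1 := fun j => pow_lt_one₀ ht0 hq (Nat.succ_ne_zero j)
  have htpos : ∀ j : ℕ, 0 < 1 - t ^ (j + 1) := fun j => by linarith [htlt j]
  -- choose N with t^(N+1) * (1-t)⁻¹ ≤ 1/2
  have hlim : Tendsto (fun N : ℕ => t ^ (N + 1) * (1 - t)⁻¹) atTop (𝓝 0) := by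
    have := (tendsto_pow_atTop_nhds_zero_of_lt_one ht0 hq).mul_const (1 - t)⁻¹
    rw [zero_mul] at this
    exact this.comp (tendsto_add_atTop_nat 1)
  obtain ⟨N, hN⟩ := (hlim.eventually (eventually_le_nhds (show (0:ℝ) < 1/2 by norm_num))).exists
  set u : ℕ → ℝ := fun k => ∏ j ∈ Finset.range k, (1 - t ^ (j + 1)) with hu
  have hupos : ∀ k, 0 < u k := fun k => Finset.prod_pos fun j _ => htpos j
  refine ⟨u N / 2, div_pos (hupos N) (by norm_num), fun k => ?_⟩
  refine le_trans ?_ (qp_norm_lower hq k)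
  rcases le_or_gt k N with hk | hk
  · have hsplit : u k * ∏ j ∈ Finset.Ico k N, (1 - t ^ (j + 1)) = u N :=
      Finset.prod_range_mul_prod_Ico _ hk
    have hle1 : ∏ j ∈ Finset.Ico k N, (1 - t ^ (j + 1)) ≤ 1 :=
      Finset.prod_le_one (fun j _ => (htpos j).le) (fun j _ => by
        have := pow_nonneg ht0 (j + 1); linarith)
    have : u N ≤ u k := by
      calc u N = u k * ∏ j ∈ Finset.Ico k N, (1 - t ^ (j + 1)) := hsplit.symm
        _ ≤ u k * 1 := mul_le_mul_of_nonneg_left hle1 (hupos k).le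
        _ = u k := mul_one _
    linarith [hupos N]
  · have hsplit : u N * ∏ j ∈ Finset.Ico N k, (1 - t ^ (j + 1)) = u k :=
      Finset.prod_range_mul_prod_Ico _ hk.le
    have hsum : ∑ j ∈ Finset.Ico N k, t ^ (j + 1) ≤ 1 / 2 := by
      rw [Finset.sum_Ico_eq_sum_range]
      have : ∀ i ∈ Finset.range (k - N), t ^ (N + i + 1) = t ^ (N + 1) * t ^ i := by
        intro i _; rw [← pow_add]; ring_nf
      rw [Finset.sum_congr rfl this, ← Finset.mul_sum]
      have hgeom : ∑ i ∈ Finset.range (k - N), t ^ i ≤ (1 - t)⁻¹ := by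
        have h1 := Summable.sum_le_tsum (Finset.range (k - N))
          (fun i _ => pow_nonneg ht0 i) (summable_geometric_of_lt_one ht0 hq)
        rwa [tsum_geometric_of_lt_one ht0 hq] at h1
      calc t ^ (N + 1) * ∑ i ∈ Finset.range (k - N), t ^ i
          ≤ t ^ (N + 1) * (1 - t)⁻¹ := mul_le_mul_of_nonneg_left hgeom (by positivity)
        _ ≤ 1 / 2 := hN
    have hw : 1 - ∑ j ∈ Finset.Ico N k, t ^ (j + 1) ≤
        ∏ j ∈ Finset.Ico N k, (1 - t ^ (j + 1)) := by
      have := weier (Finset.Ico N k) (fun j => t ^ (j + 1))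
        (fun j => pow_nonneg ht0 _) (fun j => (htlt j).le)
      simpa using this
    have h12 : (1:ℝ)/2 ≤ ∏ j ∈ Finset.Ico N k, (1 - t ^ (j + 1)) := by linarith
    calc u N / 2 = u N * (1/2) := by ring
      _ ≤ u N * ∏ j ∈ Finset.Ico N k, (1 - t ^ (j + 1)) :=
          mul_le_mul_of_nonneg_left h12 (hupos N).le
      _ = u k := hsplit

lemma qp_ne_zero {q : ℂ} (hq : ‖q‖ < 1) (k : ℕ) : qp q q k ≠ 0 := by
  obtain ⟨c, hc, hle⟩ := qp_lower hq
  intro h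
  have h2 := hle k
  rw [h, norm_zero] at h2
  linarith

noncomputable def Eser (q x : ℂ) (k : ℕ) : ℂ := q ^ (k * (k - 1) / 2) * x ^ k / qp q q k

noncomputable def E (q x : ℂ) : ℂ := ∑' k, Eser q x k

lemma summable_E {q : ℂ} (hq : ‖q‖ < 1) (x : ℂ) : Summable (Eser q x) := by
  obtain ⟨c, hc, hle⟩ := qp_lower hq
  have hb : Summable (fun k : ℕ => c⁻¹ * (‖q‖ ^ (k * (k - 1) / 2) * ‖x‖ ^ k)) :=
    (summable_KE (norm_nonneg q) hq (norm_nonneg x)).mul_left _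
  apply Summable.of_norm
  refine Summable.of_nonneg_of_le (fun k => norm_nonneg _) (fun k => ?_) hb
  rw [Eser, norm_div, norm_mul, norm_pow, norm_pow]
  calc ‖q‖ ^ (k * (k - 1) / 2) * ‖x‖ ^ k / ‖qp q q k‖
      ≤ ‖q‖ ^ (k * (k - 1) / 2) * ‖x‖ ^ k / c :=
        div_le_div_of_nonneg_left (by positivity) hc (hle k)
    _ = c⁻¹ * (‖q‖ ^ (k * (k - 1) / 2) * ‖x‖ ^ k) := by rw [div_eq_inv_mul]

lemma E_rec {q : ℂ} (hq : ‖q‖ < 1) (x : ℂ) : E q x = (1 + x) * E q (q * x) := by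
  have h1 : Summable (Eser q x) := summable_E hq x
  have h2 : Summable (Eser q (q * x)) := summable_E hq (q * x)
  have hD : ∀ k : ℕ, Eser q x (k + 1) - Eser q (q * x) (k + 1) = x * Eser q (q * x) k := by
    intro k
    have hqp : qp q q (k + 1) = qp q q k * (1 - q * q ^ k) := Finset.prod_range_succ _ _
    have hne : qp q q k ≠ 0 := qp_ne_zero hq k
    have hne2 : (1 : ℂ) - q * q ^ k ≠ 0 := by
      intro h
      have heq : q * q ^ k = 1 := by linear_combination -h
      have hn : ‖q * q ^ k‖ < 1 := by
        rw [norm_mul, norm_pow]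
        have h1 : ‖q‖ ^ k ≤ 1 := pow_le_one₀ (norm_nonneg q) hq.le
        nlinarith [norm_nonneg q, pow_nonneg (norm_nonneg q) k]
      rw [heq] at hn; simp at hn
    rw [Eser, Eser, Eser, hqp, exp_succ]
    field_simp
    ring
  have hsub : E q x - E q (q * x) = ∑' k, (Eser q x k - Eser q (q * x) k) :=
    (Summable.tsum_sub h1 h2).symm
  have hDsum : Summable (fun k => Eser q x k - Eser q (q * x) k) := h1.sub h2
  have h0 : Eser q x 0 - Eser q (q * x) 0 = 0 := by simp [Eser]
  have hshift : ∑' k, (Eser q x k - Eser q (q * x) k) =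
      ∑' k, (Eser q x (k + 1) - Eser q (q * x) (k + 1)) := by
    rw [Summable.tsum_eq_zero_add hDsum, h0, zero_add]
  have : E q x - E q (q * x) = x * E q (q * x) := by
    rw [hsub, hshift]
    simp_rw [hD]
    rw [tsum_mul_left]
    rfl
  linear_combination this

lemma E_iter {q : ℂ} (hq : ‖q‖ < 1) (x : ℂ) (n : ℕ) :
    E q x = (∏ j ∈ Finset.range n, (1 + x * q ^ j)) * E q (q ^ n * x) := by
  induction n with
  | zero => simp
  | succ n ih =>
    rw [ih, E_rec hq (q ^ n * x), Finset.prod_range_succ]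
    have : q * (q ^ n * x) = q ^ (n + 1) * x := by ring
    rw [mul_assoc]
    congr 1
    rw [this]
    ring

lemma E_tendsto_one {q : ℂ} (hq : ‖q‖ < 1) (x : ℂ) :
    Tendsto (fun n => E q (q ^ n * x)) atTop (𝓝 1) := by
  obtain ⟨c, hc, hle⟩ := qp_lower hq
  have key : Tendsto (fun n => ∑' k, Eser q (q ^ n * x) k) atTop
      (𝓝 (∑' k : ℕ, if k = 0 then (1 : ℂ) else 0)) := by
    apply tendsto_tsum_of_dominated_convergence
      (bound := fun k : ℕ => c⁻¹ * (‖q‖ ^ (k * (k - 1) / 2) * ‖x‖ ^ k))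
    · exact (summable_KE (norm_nonneg q) hq (norm_nonneg x)).mul_left _
    · intro k
      rcases Nat.eq_zero_or_pos k with hk | hk
      · subst hk
        have : ∀ n : ℕ, Eser q (q ^ n * x) 0 = 1 := by
          intro n; simp [Eser, qp]
        simpa [this] using tendsto_const_nhds
      · have hk0 : k ≠ 0 := hk.ne'
        have hfac : ∀ n : ℕ, Eser q (q ^ n * x) k =
            (q ^ k) ^ n * (q ^ (k * (k - 1) / 2) * x ^ k / qp q q k) := by
          intro n
          rw [Eser, mul_pow, ← pow_mul, ← pow_mul]
          rw [mul_comm k n]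
          field_simp
        simp only [hfac, if_neg hk0]
        have hlt : ‖q ^ k‖ < 1 := by
          rw [norm_pow]; exact pow_lt_one₀ (norm_nonneg q) hq hk0
        simpa using (tendsto_pow_atTop_nhds_zero_of_norm_lt_one hlt).mul_const
          (q ^ (k * (k - 1) / 2) * x ^ k / qp q q k)
    · filter_upwards with n
      intro k
      rw [Eser, norm_div, norm_mul, norm_pow, norm_pow]
      have hxn : ‖q ^ n * x‖ ≤ ‖x‖ := by
        rw [norm_mul, norm_pow]
        calc ‖q‖ ^ n * ‖x‖ ≤ 1 * ‖x‖ :=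
              mul_le_mul_of_nonneg_right (pow_le_one₀ (norm_nonneg q) hq.le) (norm_nonneg x)
          _ = ‖x‖ := one_mul _
      calc ‖q‖ ^ (k * (k - 1) / 2) * ‖q ^ n * x‖ ^ k / ‖qp q q k‖
          ≤ ‖q‖ ^ (k * (k - 1) / 2) * ‖x‖ ^ k / ‖qp q q k‖ := by
            gcongr
        _ ≤ ‖q‖ ^ (k * (k - 1) / 2) * ‖x‖ ^ k / c :=
            div_le_div_of_nonneg_left (by positivity) hc (hle k)
        _ = c⁻¹ * (‖q‖ ^ (k * (k - 1) / 2) * ‖x‖ ^ k) := by rw [div_eq_inv_mul]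
  have : (∑' k : ℕ, if k = 0 then (1 : ℂ) else 0) = 1 := by
    rw [tsum_eq_single 0 (fun b hb => if_neg hb)]
    simp
  rw [this] at key
  exact key

lemma euler {q : ℂ} (hq : ‖q‖ < 1) (x : ℂ) : qpi (-x) q = E q x := by
  have hqpi : qpi (-x) q = ∏' j : ℕ, (1 + x * q ^ j) := by
    rw [qpi]
    apply tprod_congr
    intro j
    ring
  by_cases hz : ∃ j : ℕ, 1 + x * q ^ j = 0
  · obtain ⟨j0, hj0⟩ := hz
    have hE : E q x = 0 := by
      rw [E_iter hq x (j0 + 1),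
        Finset.prod_eq_zero (Finset.mem_range.2 (Nat.lt_succ_self j0)) hj0, zero_mul]
    have hprod : HasProd (fun j : ℕ => 1 + x * q ^ j) 0 := by
      rw [HasProd]
      apply Tendsto.congr' ?_ tendsto_const_nhds
      rw [EventuallyEq, SummationFilter.unconditional_filter, eventually_atTop]
      exact ⟨{j0}, fun s hs =>
        (Finset.prod_eq_zero (hs (Finset.mem_singleton_self j0)) hj0).symm⟩
    rw [hqpi, hprod.tprod_eq, hE]
  · push_neg at hz
    -- all factors nonzero: multipliable via logs
    have hlog : Summable (fun j : ℕ => Complex.log (1 + x * q ^ j)) := by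
      have hten : Tendsto (fun j : ℕ => ‖x‖ * ‖q‖ ^ j) atTop (𝓝 0) := by
        simpa using (tendsto_pow_atTop_nhds_zero_of_lt_one (norm_nonneg q) hq).const_mul ‖x‖
      obtain ⟨N, hN⟩ := (eventually_atTop.1
        (hten.eventually (eventually_le_nhds (show (0:ℝ) < 1/2 by norm_num))))
      rw [← summable_nat_add_iff N]
      have hb : Summable (fun j : ℕ => (3/2 : ℝ) * (‖x‖ * ‖q‖ ^ N * ‖q‖ ^ j)) := by
        apply Summable.mul_left
        apply Summable.mul_left
        exact summable_geometric_of_lt_one (norm_nonneg q) hq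
      apply Summable.of_norm
      refine Summable.of_nonneg_of_le (fun j => norm_nonneg _) (fun j => ?_) hb
      have hsmall : ‖x * q ^ (j + N)‖ ≤ 1/2 := by
        rw [norm_mul, norm_pow]
        calc ‖x‖ * ‖q‖ ^ (j + N) = ‖x‖ * ‖q‖ ^ (j + N) := rfl
          _ ≤ 1/2 := by
            have := hN (j + N) (Nat.le_add_left N j)
            rwa [add_comm j N, pow_add] at this ⊢
            -- careful
      calc ‖Complex.log (1 + x * q ^ (j + N))‖ ≤ 3/2 * ‖x * q ^ (j + N)‖ :=
            Complex.norm_log_one_add_half_le_self hsmall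
        _ = 3/2 * (‖x‖ * ‖q‖ ^ N * ‖q‖ ^ j) := by
            rw [norm_mul, norm_pow, pow_add]; ring
    have hmul : Multipliable (fun j : ℕ => 1 + x * q ^ j) :=
      Complex.multipliable_of_summable_log hlog
    have h1 : Tendsto (fun n => ∏ j ∈ Finset.range n, (1 + x * q ^ j)) atTop
        (𝓝 (∏' j : ℕ, (1 + x * q ^ j))) := hmul.hasProd.tendsto_prod_nat
    have h2 : Tendsto (fun n => (∏ j ∈ Finset.range n, (1 + x * q ^ j)) * E q (q ^ n * x))
        atTop (𝓝 ((∏' j : ℕ, (1 + x * q ^ j)) * 1)) := h1.mul (E_tendsto_one hq x)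
    have h3 : Tendsto (fun _ : ℕ => E q x) atTop (𝓝 (E q x)) := tendsto_const_nhds
    have h4 : (fun n : ℕ => E q x) =
        (fun n => (∏ j ∈ Finset.range n, (1 + x * q ^ j)) * E q (q ^ n * x)) :=
      funext fun n => E_iter hq x n
    rw [h4] at h3
    have := tendsto_nhds_unique h3 h2
    rw [hqpi, this, mul_one]

end DoubleEuler

theorem double_euler (q p x y r : ℂ) (hq : ‖q‖ < 1) (hp : ‖p‖ < 1) (hr : ‖r‖ ≤ 1) :
    ∑' k : ℕ, p ^ (k * (k - 1) / 2) * y ^ k * qpi (-(r ^ k * x)) q / qp p p k =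
      ∑' k : ℕ, q ^ (k * (k - 1) / 2) * x ^ k * qpi (-(r ^ k * y)) p / qp q q k := by
  obtain ⟨cp, hcp, hlep⟩ := DoubleEuler.qp_lower hp
  obtain ⟨cq, hcq, hleq⟩ := DoubleEuler.qp_lower hq
  set F : ℕ → ℕ → ℂ := fun k m =>
    (p ^ (k * (k - 1) / 2) * y ^ k / qp p p k) *
      (q ^ (m * (m - 1) / 2) * x ^ m / qp q q m) * r ^ (k * m) with hFdef
  have hFs : Summable (Function.uncurry F) := by
    apply Summable.of_norm
    have hb : Summable (fun km : ℕ × ℕ =>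
        (cp⁻¹ * (‖p‖ ^ (km.1 * (km.1 - 1) / 2) * ‖y‖ ^ km.1)) *
        (cq⁻¹ * (‖q‖ ^ (km.2 * (km.2 - 1) / 2) * ‖x‖ ^ km.2))) := by
      apply Summable.mul_of_nonneg
        ((DoubleEuler.summable_KE (norm_nonneg p) hp (norm_nonneg y)).mul_left cp⁻¹)
        ((DoubleEuler.summable_KE (norm_nonneg q) hq (norm_nonneg x)).mul_left cq⁻¹)
        (fun k => ?_) (fun m => ?_) <;> simp only [Pi.zero_apply] <;> positivity
    refine Summable.of_nonneg_of_le (fun km => norm_nonneg _) (fun km => ?_) hb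
    obtain ⟨k, m⟩ := km
    have hr1 : ‖r ^ (k * m)‖ ≤ 1 := by
      rw [norm_pow]; exact pow_le_one₀ (norm_nonneg r) hr
    have hqpp : 0 < ‖qp p p k‖ := lt_of_lt_of_le hcp (hlep k)
    have hqpq : 0 < ‖qp q q m‖ := lt_of_lt_of_le hcq (hleq m)
    calc ‖Function.uncurry F (k, m)‖
        = (‖p‖ ^ (k * (k - 1) / 2) * ‖y‖ ^ k / ‖qp p p k‖) *
          (‖q‖ ^ (m * (m - 1) / 2) * ‖x‖ ^ m / ‖qp q q m‖) * ‖r ^ (k * m)‖ := by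
          simp only [Function.uncurry_apply_pair, hFdef, norm_mul, norm_div, norm_pow]
      _ ≤ (‖p‖ ^ (k * (k - 1) / 2) * ‖y‖ ^ k / ‖qp p p k‖) *
          (‖q‖ ^ (m * (m - 1) / 2) * ‖x‖ ^ m / ‖qp q q m‖) * 1 := by
          gcongr
      _ = (‖p‖ ^ (k * (k - 1) / 2) * ‖y‖ ^ k / ‖qp p p k‖) *
          (‖q‖ ^ (m * (m - 1) / 2) * ‖x‖ ^ m / ‖qp q q m‖) := mul_one _
      _ ≤ (‖p‖ ^ (k * (k - 1) / 2) * ‖y‖ ^ k / cp) *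
          (‖q‖ ^ (m * (m - 1) / 2) * ‖x‖ ^ m / cq) := by
          gcongr <;> first | exact hlep k | exact hleq m
      _ = (cp⁻¹ * (‖p‖ ^ (k * (k - 1) / 2) * ‖y‖ ^ k)) *
          (cq⁻¹ * (‖q‖ ^ (m * (m - 1) / 2) * ‖x‖ ^ m)) := by
          rw [div_eq_inv_mul, div_eq_inv_mul]
  have hL : ∀ k : ℕ, p ^ (k * (k - 1) / 2) * y ^ k * qpi (-(r ^ k * x)) q / qp p p k
      = ∑' m, F k m := by
    intro k
    rw [DoubleEuler.euler hq (r ^ k * x), DoubleEuler.E]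
    have h1 : p ^ (k * (k - 1) / 2) * y ^ k *
        (∑' m, DoubleEuler.Eser q (r ^ k * x) m) / qp p p k =
        ∑' m, (p ^ (k * (k - 1) / 2) * y ^ k / qp p p k) *
          DoubleEuler.Eser q (r ^ k * x) m := by
      rw [tsum_mul_left]
      ring
    rw [h1]
    apply tsum_congr
    intro m
    rw [DoubleEuler.Eser, hFdef]
    have h2 : (r ^ k * x) ^ m = x ^ m * r ^ (k * m) := by
      rw [mul_pow, ← pow_mul]; ring
    rw [h2]
    ring
  have hR : ∀ k : ℕ, q ^ (k * (k - 1) / 2) * x ^ k * qpi (-(r ^ k * y)) p / qp q q k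
      = ∑' m, F m k := by
    intro k
    rw [DoubleEuler.euler hp (r ^ k * y), DoubleEuler.E]
    have h1 : q ^ (k * (k - 1) / 2) * x ^ k *
        (∑' m, DoubleEuler.Eser p (r ^ k * y) m) / qp q q k =
        ∑' m, (q ^ (k * (k - 1) / 2) * x ^ k / qp q q k) *
          DoubleEuler.Eser p (r ^ k * y) m := by
      rw [tsum_mul_left]
      ring
    rw [h1]
    apply tsum_congr
    intro m
    rw [DoubleEuler.Eser, hFdef]
    have h2 : (r ^ k * y) ^ m = y ^ m * r ^ (m * k) := by
      rw [mul_pow, ← pow_mul, mul_comm k m]; ring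
    rw [h2]
    ring
  rw [tsum_congr hL, tsum_congr hR]
  exact (Summable.tsum_comm hFs).symm
end

section
/- For |q|<1 and complex x, t with no vanishing denominators: (-x;q)_∞ · Σ_{k≥0} q^{k(k-1)} y^k / ((q^2;q^2)_k (-x;q)_{2k}) = (-y;q^2)_∞ · Σ_{k≥0} q^{k(k-1)/2} x^k / ((q;q)_k (-y;q^2)_k). -/
open Filter Finset Complex Topology

set_option maxHeartbeats 1000000

/-! ### Auxiliary lemmas -/

lemma qp_succ (a q : ℂ) (k : ℕ) : qp a q (k + 1) = qp a q k * (1 - a * q ^ k) :=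
  Finset.prod_range_succ _ _

lemma tri_succ (n : ℕ) : (n + 1) * n / 2 = n * (n - 1) / 2 + n := by
  have h : (n + 1) * n = n * (n - 1) + 2 * n := by
    cases n with
    | zero => simp
    | succ m => rw [Nat.succ_sub_one]; ring
  rw [h, Nat.add_mul_div_left _ _ (by norm_num : 0 < 2)]

lemma two_mul_tri (k : ℕ) : 2 * (k * (k - 1) / 2) = k * (k - 1) := by
  have h : Even (k * (k - 1)) := by
    cases k with
    | zero => simp
    | succ m => simpa [Nat.succ_sub_one, mul_comm] using Nat.even_mul_succ_self m
  obtain ⟨c, hc⟩ := h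
  rw [hc]
  omega

lemma one_sub_ne {z : ℂ} (hz : ‖z‖ < 1) : 1 - z ≠ 0 := by
  intro h
  have : z = 1 := by linear_combination -h
  rw [this] at hz; simp at hz

lemma norm_q_pow_le {q : ℂ} (hq : ‖q‖ < 1) (n : ℕ) : ‖q * q ^ n‖ ≤ ‖q‖ := by
  rw [norm_mul, norm_pow]
  calc ‖q‖ * ‖q‖ ^ n ≤ ‖q‖ * 1 := by
        gcongr
        · exact pow_le_one₀ (norm_nonneg q) hq.le
    _ = ‖q‖ := mul_one _

lemma qq_ne {q : ℂ} (hq : ‖q‖ < 1) (n : ℕ) : qp q q n ≠ 0 := by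
  rw [qp]
  apply Finset.prod_ne_zero_iff.2
  intro j _
  exact one_sub_ne (lt_of_le_of_lt (norm_q_pow_le hq j) hq)

lemma factor_ne {a q : ℂ} (h : ∀ k, qp a q k ≠ 0) (j : ℕ) : 1 - a * q ^ j ≠ 0 := by
  have := h (j + 1)
  rw [qp_succ] at this
  exact right_ne_zero_of_mul this

lemma norm_one_sub_inv_le {q : ℂ} (hq : ‖q‖ < 1) (n : ℕ) :
    ‖(1 - q * q ^ n)⁻¹‖ ≤ (1 - ‖q‖)⁻¹ := by
  have h1 : ‖q * q ^ n‖ ≤ ‖q‖ := norm_q_pow_le hq n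
  have h2 : 1 - ‖q‖ ≤ ‖1 - q * q ^ n‖ := by
    calc 1 - ‖q‖ ≤ 1 - ‖q * q ^ n‖ := by linarith
      _ = ‖(1 : ℂ)‖ - ‖q * q ^ n‖ := by simp
      _ ≤ ‖1 - q * q ^ n‖ := norm_sub_norm_le _ _
  rw [norm_inv]
  exact inv_anti₀ (by linarith) h2

/-- Euler coefficients -/
noncomputable def ec (q : ℂ) (n : ℕ) : ℂ := q ^ (n * (n - 1) / 2) / qp q q n

lemma ec_zero (q : ℂ) : ec q 0 = 1 := by simp [ec, qp]

lemma ec_succ {q : ℂ} (hq : ‖q‖ < 1) (n : ℕ) :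
    ec q (n + 1) = ec q n * (q ^ n / (1 - q * q ^ n)) := by
  rw [ec, ec, qp_succ]
  have ht : (n + 1) * (n + 1 - 1) / 2 = n * (n - 1) / 2 + n := by
    rw [Nat.add_sub_cancel]; exact tri_succ n
  rw [ht, pow_add]
  have h1 := qq_ne hq n
  have h2 : (1 - q * q ^ n) ≠ 0 := one_sub_ne (lt_of_le_of_lt (norm_q_pow_le hq n) hq)
  field_simp

/-- Summability (in norm) of the Euler series. -/
lemma summable_ec_norm {q : ℂ} (hq : ‖q‖ < 1) (w : ℂ) :
    Summable (fun n : ℕ => ‖ec q n * w ^ n‖) := by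
  apply summable_of_ratio_norm_eventually_le (r := 1 / 2) (by norm_num)
  have htend : Tendsto (fun n : ℕ => ‖w‖ * (1 - ‖q‖)⁻¹ * ‖q‖ ^ n) atTop (𝓝 0) := by
    have := tendsto_pow_atTop_nhds_zero_of_lt_one (norm_nonneg q) hq
    simpa using this.const_mul (‖w‖ * (1 - ‖q‖)⁻¹)
  filter_upwards [htend.eventually_le_const (by norm_num : (0 : ℝ) < 1 / 2)] with n hn
  have heq : ec q (n + 1) * w ^ (n + 1) = ec q n * w ^ n * (q ^ n * w * (1 - q * q ^ n)⁻¹) := by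
    rw [ec_succ hq n, pow_succ]
    ring
  rw [norm_norm, norm_norm, heq, norm_mul]
  have hb : ‖q ^ n * w * (1 - q * q ^ n)⁻¹‖ ≤ 1 / 2 := by
    calc ‖q ^ n * w * (1 - q * q ^ n)⁻¹‖ = ‖q‖ ^ n * ‖w‖ * ‖(1 - q * q ^ n)⁻¹‖ := by
          rw [norm_mul, norm_mul, norm_pow]
      _ ≤ ‖q‖ ^ n * ‖w‖ * (1 - ‖q‖)⁻¹ := by
          gcongr
          exact norm_one_sub_inv_le hq n
      _ = ‖w‖ * (1 - ‖q‖)⁻¹ * ‖q‖ ^ n := by ring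
      _ ≤ 1 / 2 := hn
  calc ‖ec q n * w ^ n‖ * ‖q ^ n * w * (1 - q * q ^ n)⁻¹‖
      ≤ ‖ec q n * w ^ n‖ * (1 / 2) := by gcongr
    _ = 1 / 2 * ‖ec q n * w ^ n‖ := by ring

lemma summable_ec {q : ℂ} (hq : ‖q‖ < 1) (w : ℂ) :
    Summable (fun n : ℕ => ec q n * w ^ n) :=
  (summable_ec_norm hq w).of_norm

/-- The Euler series. -/
noncomputable def es (q w : ℂ) : ℂ := ∑' n : ℕ, ec q n * w ^ n

lemma es_funeq {q : ℂ} (hq : ‖q‖ < 1) (w : ℂ) : es q w = (1 + w) * es q (q * w) := by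
  have hs1 := summable_ec hq w
  have hs2 := summable_ec hq (q * w)
  have key : es q w - es q (q * w) = w * es q (q * w) := by
    have hdiff : es q w - es q (q * w)
        = ∑' n : ℕ, (ec q n * w ^ n - ec q n * (q * w) ^ n) := by
      rw [es, es, ← Summable.tsum_sub hs1 hs2]
    rw [hdiff, Summable.tsum_eq_zero_add (hs1.sub hs2)]
    have h0 : ec q 0 * w ^ 0 - ec q 0 * (q * w) ^ 0 = 0 := by simp
    rw [h0, zero_add]
    have hrhs : w * es q (q * w) = ∑' n : ℕ, w * (ec q n * (q * w) ^ n) := by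
      rw [es, tsum_mul_left]
    rw [hrhs]
    apply tsum_congr
    intro n
    have h1 := qq_ne hq n
    have h2 : (1 - q * q ^ n) ≠ 0 := one_sub_ne (lt_of_le_of_lt (norm_q_pow_le hq n) hq)
    rw [ec_succ hq n, mul_pow, pow_succ, pow_succ]
    field_simp
    have hD : (1 - q * q ^ n) * (1 - q * q ^ n)⁻¹ = 1 := mul_inv_cancel₀ h2
    linear_combination (ec q n * q ^ n * w * w ^ n) * hD
  have : es q w = es q (q * w) + w * es q (q * w) := by linear_combination key
  rw [this]; ring

lemma es_iter {q : ℂ} (hq : ‖q‖ < 1) (w : ℂ) (m : ℕ) :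
    es q w = qp (-w) q m * es q (q ^ m * w) := by
  induction m with
  | zero => simp [qp]
  | succ m ih =>
    rw [ih, qp_succ, es_funeq hq (q ^ m * w)]
    have h1 : q * (q ^ m * w) = q ^ (m + 1) * w := by ring
    have h2 : (1 : ℂ) - (-w) * q ^ m = 1 + q ^ m * w := by ring
    rw [h1, h2]
    ring

lemma multipliable_one_sub {a q : ℂ} (hq : ‖q‖ < 1) (hne : ∀ j : ℕ, 1 - a * q ^ j ≠ 0) :
    Multipliable (fun j : ℕ => 1 - a * q ^ j) := by
  have := Complex.multipliable_of_summable_log (f := fun j : ℕ => 1 - a * q ^ j) ?_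
  · exact this
  apply Summable.of_norm_bounded_eventually_nat (g := fun n => 3 / 2 * (‖a‖ * ‖q‖ ^ n))
  · apply Summable.mul_left
    exact (summable_geometric_of_lt_one (norm_nonneg q) hq).mul_left ‖a‖
  · have htend : Tendsto (fun n : ℕ => ‖a‖ * ‖q‖ ^ n) atTop (𝓝 0) := by
      have := tendsto_pow_atTop_nhds_zero_of_lt_one (norm_nonneg q) hq
      simpa using this.const_mul ‖a‖
    filter_upwards [htend.eventually_le_const (by norm_num : (0 : ℝ) < 1 / 2)] with n hn
    have hz : ‖-(a * q ^ n)‖ ≤ 1 / 2 := by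
      rw [norm_neg, norm_mul, norm_pow]; exact hn
    have hlog := Complex.norm_log_one_add_half_le_self hz
    have heq : (1 : ℂ) + -(a * q ^ n) = 1 - a * q ^ n := by ring
    rw [heq] at hlog
    calc ‖Complex.log (1 - a * q ^ n)‖ ≤ 3 / 2 * ‖-(a * q ^ n)‖ := hlog
      _ = 3 / 2 * (‖a‖ * ‖q‖ ^ n) := by rw [norm_neg, norm_mul, norm_pow]

lemma es_small {q : ℂ} (hq : ‖q‖ < 1) (w : ℂ) :
    Tendsto (fun m : ℕ => es q (q ^ m * w)) atTop (𝓝 1) := by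
  have key : Tendsto (fun m : ℕ => ∑' n : ℕ, ec q n * (q ^ m * w) ^ n) atTop
      (𝓝 (∑' n : ℕ, if n = 0 then (1 : ℂ) else 0)) := by
    apply tendsto_tsum_of_dominated_convergence (bound := fun n => ‖ec q n * w ^ n‖)
      (summable_ec_norm hq w)
    · intro n
      cases n with
      | zero =>
        simp only [pow_zero, mul_one, if_pos rfl, ec_zero]
        exact tendsto_const_nhds
      | succ k =>
        simp only [Nat.succ_ne_zero, if_false]
        have hnorm : ‖q ^ (k + 1)‖ < 1 := by
          rw [norm_pow]
          exact pow_lt_one₀ (norm_nonneg q) hq (Nat.succ_ne_zero k)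
        have htend : Tendsto (fun m : ℕ => (q ^ (k + 1)) ^ m) atTop (𝓝 0) :=
          tendsto_pow_atTop_nhds_zero_of_norm_lt_one hnorm
        have heq : ∀ m : ℕ, ec q (k + 1) * (q ^ m * w) ^ (k + 1)
            = ec q (k + 1) * w ^ (k + 1) * (q ^ (k + 1)) ^ m := by
          intro m
          rw [mul_pow, ← pow_mul, ← pow_mul, mul_comm m (k + 1)]
          ring
        simp only [heq]
        simpa using htend.const_mul (ec q (k + 1) * w ^ (k + 1))
    · filter_upwards with m n
      calc ‖ec q n * (q ^ m * w) ^ n‖ = ‖ec q n‖ * (‖q ^ m‖ * ‖w‖) ^ n := by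
            rw [norm_mul, norm_pow, norm_mul]
        _ ≤ ‖ec q n‖ * (1 * ‖w‖) ^ n := by
            gcongr
            rw [norm_pow]
            exact pow_le_one₀ (norm_nonneg q) hq.le
        _ = ‖ec q n * w ^ n‖ := by rw [one_mul, norm_mul, norm_pow]
  have hsum : (∑' n : ℕ, if n = 0 then (1 : ℂ) else 0) = 1 := tsum_ite_eq 0 1
  rw [hsum] at key
  exact key

/-- Euler's identity: `∏ (1 + w q^j) = ∑ q^(n(n-1)/2) w^n / (q;q)_n`. -/
lemma euler {q : ℂ} (hq : ‖q‖ < 1) (w : ℂ) (hne : ∀ j : ℕ, 1 - (-w) * q ^ j ≠ 0) :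
    qpi (-w) q = es q w := by
  have hmult := multipliable_one_sub hq hne
  have h1 : Tendsto (fun m : ℕ => qp (-w) q m) atTop (𝓝 (qpi (-w) q)) :=
    hmult.hasProd.tendsto_prod_nat
  have h2 : Tendsto (fun m : ℕ => qp (-w) q m * es q (q ^ m * w)) atTop
      (𝓝 (qpi (-w) q * 1)) := h1.mul (es_small hq w)
  have h3 : (fun m : ℕ => qp (-w) q m * es q (q ^ m * w)) = fun _ => es q w := by
    funext m
    exact (es_iter hq w m).symm
  rw [h3] at h2
  have := tendsto_nhds_unique tendsto_const_nhds h2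
  rw [this, mul_one]

lemma qpi_split {a q : ℂ} (hq : ‖q‖ < 1) (hne : ∀ j : ℕ, 1 - a * q ^ j ≠ 0) (m : ℕ) :
    qpi a q = qp a q m * qpi (a * q ^ m) q := by
  have hne2 : ∀ j : ℕ, 1 - (a * q ^ m) * q ^ j ≠ 0 := by
    intro j
    have h := hne (m + j)
    rw [pow_add] at h
    intro hcon; apply h; rw [← hcon]; ring
  have hmult2 := multipliable_one_sub hq hne2
  have hmult2' : Multipliable (fun n : ℕ => 1 - a * q ^ (n + m)) := by
    have heqf : (fun n : ℕ => 1 - a * q ^ (n + m)) = fun j : ℕ => 1 - (a * q ^ m) * q ^ j := by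
      funext j; rw [pow_add]; ring
    rw [heqf]; exact hmult2
  have h := Multipliable.prod_mul_tprod_nat_mul' (f := fun j : ℕ => 1 - a * q ^ j) (k := m) hmult2'
  rw [qpi, ← h, qp]
  congr 1
  rw [qpi]
  apply tprod_congr
  intro j
  show 1 - a * q ^ (j + m) = 1 - a * q ^ m * q ^ j
  rw [pow_add]
  ring

/-- The common double series. -/
noncomputable def dd (q x y : ℂ) (k n : ℕ) : ℂ :=
  ec (q ^ 2) k * y ^ k * (ec q n * x ^ n) * q ^ (2 * k * n)

lemma summable_dd {q : ℂ} (hq : ‖q‖ < 1) (hq2 : ‖q ^ 2‖ < 1) (x y : ℂ) :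
    Summable (Function.uncurry (dd q x y)) := by
  apply Summable.of_norm_bounded
    (g := fun p : ℕ × ℕ => ‖ec (q ^ 2) p.1 * y ^ p.1‖ * ‖ec q p.2 * x ^ p.2‖)
  · exact (summable_ec_norm hq2 y).mul_of_nonneg (summable_ec_norm hq x)
      (fun _ => norm_nonneg _) (fun _ => norm_nonneg _)
  · rintro ⟨k, n⟩
    show ‖dd q x y k n‖ ≤ _
    rw [dd, norm_mul, norm_mul]
    calc ‖ec (q ^ 2) k * y ^ k‖ * ‖ec q n * x ^ n‖ * ‖q ^ (2 * k * n)‖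
        ≤ ‖ec (q ^ 2) k * y ^ k‖ * ‖ec q n * x ^ n‖ * 1 := by
          gcongr
          rw [norm_pow]
          exact pow_le_one₀ (norm_nonneg q) hq.le
      _ = ‖ec (q ^ 2) k * y ^ k‖ * ‖ec q n * x ^ n‖ := mul_one _

/-! ### Main theorem -/

theorem quadratic_transform (q x y : ℂ) (hq : ‖q‖ < 1)
    (h1 : ∀ k, qp (-x) q k ≠ 0) (h2 : ∀ k, qp (-y) (q ^ 2) k ≠ 0) :
    qpi (-x) q * ∑' k : ℕ, q ^ (k * (k - 1)) * y ^ k / (qp (q ^ 2) (q ^ 2) k * qp (-x) q (2 * k)) =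
      qpi (-y) (q ^ 2) *
        ∑' k : ℕ, q ^ (k * (k - 1) / 2) * x ^ k / (qp q q k * qp (-y) (q ^ 2) k) := by
  have hq2 : ‖q ^ 2‖ < 1 := by
    rw [norm_pow]
    calc ‖q‖ ^ 2 ≤ ‖q‖ ^ 1 := pow_le_pow_of_le_one (norm_nonneg q) hq.le (by norm_num)
      _ = ‖q‖ := pow_one _
      _ < 1 := hq
  have hxne : ∀ j : ℕ, 1 - (-x) * q ^ j ≠ 0 := factor_ne h1
  have hyne : ∀ j : ℕ, 1 - (-y) * (q ^ 2) ^ j ≠ 0 := factor_ne h2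
  -- LHS computation
  have hL : qpi (-x) q *
      (∑' k : ℕ, q ^ (k * (k - 1)) * y ^ k / (qp (q ^ 2) (q ^ 2) k * qp (-x) q (2 * k)))
      = ∑' k : ℕ, ∑' n : ℕ, dd q x y k n := by
    rw [← tsum_mul_left]
    apply tsum_congr
    intro k
    have hsplit := qpi_split hq hxne (2 * k)
    have hxk : (-x) * q ^ (2 * k) = -(x * q ^ (2 * k)) := by ring
    rw [hxk] at hsplit
    have heuler := euler hq (x * q ^ (2 * k)) (by
      intro j
      have h := hxne (2 * k + j)
      rw [pow_add] at h
      intro hcon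
      apply h
      rw [← hcon]
      ring)
    have step1 : qpi (-x) q *
        (q ^ (k * (k - 1)) * y ^ k / (qp (q ^ 2) (q ^ 2) k * qp (-x) q (2 * k)))
        = (q ^ (k * (k - 1)) * y ^ k / qp (q ^ 2) (q ^ 2) k) * es q (x * q ^ (2 * k)) := by
      rw [hsplit, heuler]
      have hk1 := h1 (2 * k)
      have hk2 := qq_ne hq2 k
      field_simp
    rw [step1, es, ← tsum_mul_left]
    apply tsum_congr
    intro n
    rw [dd, ec, ec]
    have hpow : (q ^ 2) ^ (k * (k - 1) / 2) = q ^ (k * (k - 1)) := by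
      rw [← pow_mul, two_mul_tri]
    have hpow2 : (x * q ^ (2 * k)) ^ n = x ^ n * q ^ (2 * k * n) := by
      rw [mul_pow, ← pow_mul]
    rw [hpow, hpow2]
    have hd1 := qq_ne hq2 k
    have hd2 := qq_ne hq n
    field_simp
  -- RHS computation
  have hR : qpi (-y) (q ^ 2) *
      (∑' n : ℕ, q ^ (n * (n - 1) / 2) * x ^ n / (qp q q n * qp (-y) (q ^ 2) n))
      = ∑' n : ℕ, ∑' k : ℕ, dd q x y k n := by
    rw [← tsum_mul_left]
    apply tsum_congr
    intro n
    have hsplit := qpi_split hq2 hyne n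
    have hyk : (-y) * (q ^ 2) ^ n = -(y * (q ^ 2) ^ n) := by ring
    rw [hyk] at hsplit
    have heuler := euler hq2 (y * (q ^ 2) ^ n) (by
      intro j
      have h := hyne (n + j)
      rw [pow_add] at h
      intro hcon
      apply h
      rw [← hcon]
      ring)
    have step1 : qpi (-y) (q ^ 2) *
        (q ^ (n * (n - 1) / 2) * x ^ n / (qp q q n * qp (-y) (q ^ 2) n))
        = (q ^ (n * (n - 1) / 2) * x ^ n / qp q q n) * es (q ^ 2) (y * (q ^ 2) ^ n) := by
      rw [hsplit, heuler]
      have hk1 := h2 n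
      have hk2 := qq_ne hq n
      field_simp
    rw [step1, es, ← tsum_mul_left]
    apply tsum_congr
    intro k
    rw [dd, ec, ec]
    have hpow : (q ^ 2) ^ (k * (k - 1) / 2) = q ^ (k * (k - 1)) := by
      rw [← pow_mul, two_mul_tri]
    have hpow2 : (y * (q ^ 2) ^ n) ^ k = y ^ k * q ^ (2 * k * n) := by
      rw [mul_pow, ← pow_mul, ← pow_mul]
      congr 2
      ring
    rw [hpow, hpow2]
    have hd1 := qq_ne hq2 k
    have hd2 := qq_ne hq n
    field_simp
  rw [hL, hR]
  exact (Summable.tsum_comm (summable_dd hq hq2 x y)).symm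
end
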